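/- The irreducible representation ρ and the standard-embedding representation σ of SO(3) are not equivalent: there exists no linear isomorphism T : ℝ³ × ℝ² → Sym₀(ℝ³) such that T ∘ σ(h) = ρ(h) ∘ T for all h ∈ SO(3). -/

import Mathlib

open Matrix

noncomputable section

abbrev MatR (n : ℕ) : Type := Matrix (Fin n) (Fin n) ℝ

/-- The group `SO(n)` of real `n × n` orthogonal matrices of determinant `1`,
as a subgroup of the orthogonal group. -/
def SO (n : ℕ) : Subgroup (Matrix.orthogonalGroup (Fin n) ℝ) where
  carrier := {A | (A : MatR n).det = 1}
  one_mem' := by simp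
  mul_mem' := by
    intro a b ha hb
    simp only [Set.mem_setOf_eq] at *
    push_cast
    rw [det_mul, ha, hb, one_mul]
  inv_mem' := by
    intro a ha
    simp only [Set.mem_setOf_eq] at *
    rw [show ((a⁻¹ : Matrix.orthogonalGroup (Fin n) ℝ) : MatR n) = star (a : MatR n) from rfl,
      Matrix.star_eq_conjTranspose, Matrix.det_conjTranspose, ha, star_one]

/-- The underlying matrix of an element of `SO n`. -/
def SO.mat {n : ℕ} (h : SO n) : MatR n := h.1.1

/-- The space `Sym₀(ℝ³)` of symmetric trace-free real `3 × 3` matrices. -/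
def Sym0 : Submodule ℝ (MatR 3) where
  carrier := {X | Xᵀ = X ∧ X.trace = 0}
  zero_mem' := ⟨transpose_zero, trace_zero _ _⟩
  add_mem' := by
    rintro a b ⟨ha1, ha2⟩ ⟨hb1, hb2⟩
    exact ⟨by rw [transpose_add, ha1, hb1], by rw [trace_add, ha2, hb2, add_zero]⟩
  smul_mem' := by
    rintro c X ⟨h1, h2⟩
    exact ⟨by rw [transpose_smul, h1], by rw [trace_smul, h2, smul_zero]⟩

def RzM : MatR 3 := !![0,-1,0; 1,0,0; 0,0,1]
def RxM : MatR 3 := !![1,0,0; 0,0,-1; 0,1,0]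

lemma RzM_mem : RzM ∈ Matrix.unitaryGroup (Fin 3) ℝ := by
  constructor <;>
  · ext i j
    fin_cases i <;> fin_cases j <;>
      simp [RzM, Matrix.mul_apply, Fin.sum_univ_three, Matrix.one_apply, Matrix.star_apply,
        Matrix.vecHead, Matrix.vecTail]

lemma RxM_mem : RxM ∈ Matrix.unitaryGroup (Fin 3) ℝ := by
  constructor <;>
  · ext i j
    fin_cases i <;> fin_cases j <;>
      simp [RxM, Matrix.mul_apply, Fin.sum_univ_three, Matrix.one_apply, Matrix.star_apply,
        Matrix.vecHead, Matrix.vecTail]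

def RzSO : SO 3 := ⟨⟨RzM, RzM_mem⟩, by show RzM.det = 1; simp [RzM, Matrix.det_fin_three]⟩
def RxSO : SO 3 := ⟨⟨RxM, RxM_mem⟩, by show RxM.det = 1; simp [RxM, Matrix.det_fin_three]⟩

lemma commute_of_fixed (h : SO 3) (X : MatR 3)
    (hf : SO.mat h * X * (SO.mat h)⁻¹ = X) : SO.mat h * X = X * SO.mat h := by
  have hu : IsUnit (SO.mat h).det := by
    rw [show (SO.mat h).det = 1 from h.2]; exact isUnit_one
  calc SO.mat h * X = SO.mat h * X * ((SO.mat h)⁻¹ * SO.mat h) := by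
        rw [Matrix.nonsing_inv_mul _ hu, mul_one]
    _ = (SO.mat h * X * (SO.mat h)⁻¹) * SO.mat h := by rw [← mul_assoc]
    _ = X * SO.mat h := by rw [hf]

lemma key (X : MatR 3) (hsym : Xᵀ = X) (htr : X.trace = 0)
    (h1 : RzM * X = X * RzM) (h2 : RxM * X = X * RxM) : X = 0 := by
  have s01 : X 0 1 = X 1 0 := by have := congrFun (congrFun hsym 1) 0; simpa using this
  have s02 : X 0 2 = X 2 0 := by have := congrFun (congrFun hsym 2) 0; simpa using this
  have s12 : X 1 2 = X 2 1 := by have := congrFun (congrFun hsym 2) 1; simpa using this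
  have ht : X 0 0 + X 1 1 + X 2 2 = 0 := by
    simpa [Matrix.trace, Fin.sum_univ_three, Matrix.diag] using htr
  have e := fun i j => congrFun (congrFun h1 i) j
  have f := fun i j => congrFun (congrFun h2 i) j
  simp only [RzM, RxM, Matrix.mul_apply, Fin.sum_univ_three] at e f
  have e00 := e 0 0; have e01 := e 0 1; have e02 := e 0 2
  have e10 := e 1 0; have e12 := e 1 2; have e20 := e 2 0; have e21 := e 2 1
  have f00 := f 0 0; have f01 := f 0 1; have f02 := f 0 2
  have f10 := f 1 0; have f11 := f 1 1; have f12 := f 1 2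
  simp at e00 e01 e02 e10 e12 e20 e21 f00 f01 f02 f10 f11 f12
  ext i j
  fin_cases i <;> fin_cases j <;>
    simp only [Matrix.zero_apply, Fin.zero_eta, Fin.mk_one, Fin.reduceFinMk] <;> linarith

/-- The irreducible representation `ρ(h) : X ↦ h X h⁻¹` as a linear endomorphism of `Sym₀(ℝ³)`. -/
def rhoLin (h : SO 3) : Sym0 →ₗ[ℝ] Sym0 where
  toFun X := ⟨SO.mat h * (X : MatR 3) * (SO.mat h)⁻¹, by
    obtain ⟨hs, ht⟩ := X.2
    have hdet : (SO.mat h).det = 1 := h.2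
    have hinv : (SO.mat h)⁻¹ = (SO.mat h)ᵀ := by
      refine Matrix.inv_eq_left_inv ?_
      have := h.1.2.1
      simpa [Matrix.star_eq_conjTranspose, SO.mat] using this
    constructor
    · rw [hinv, Matrix.transpose_mul, Matrix.transpose_mul, Matrix.transpose_transpose, hs,
        Matrix.mul_assoc]
    · rw [Matrix.trace_mul_cycle,
        Matrix.nonsing_inv_mul _ (by rw [hdet]; exact isUnit_one), Matrix.one_mul, ht]⟩
  map_add' := by
    intro X Y
    apply Subtype.ext
    show SO.mat h * ((X : MatR 3) + (Y : MatR 3)) * (SO.mat h)⁻¹ = _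
    rw [Matrix.mul_add, Matrix.add_mul]
    rfl
  map_smul' := by
    intro c X
    apply Subtype.ext
    show SO.mat h * (c • (X : MatR 3)) * (SO.mat h)⁻¹ = _
    rw [Matrix.mul_smul, Matrix.smul_mul]
    rfl

/-- The irreducible representation `ρ` and the standard-embedding representation `σ`,
`σ(h)(v, w) = (h v, w)`, of `SO(3)` are not equivalent: no linear isomorphism
`T : ℝ³ × ℝ² → Sym₀(ℝ³)` intertwines them. -/
theorem rho_not_equivalent_standard :
    ¬ ∃ T : ((Fin 3 → ℝ) × (Fin 2 → ℝ)) ≃ₗ[ℝ] Sym0,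
        ∀ (h : SO 3) (v : Fin 3 → ℝ) (w : Fin 2 → ℝ),
          T ((SO.mat h).mulVec v, w) = rhoLin h (T (v, w))  := by
  rintro ⟨T, hT⟩
  set w0 : Fin 2 → ℝ := ![1, 0] with hw0
  set X : Sym0 := T (0, w0) with hX
  have hfix : ∀ h : SO 3, rhoLin h X = X := by
    intro h
    have := hT h 0 w0
    rw [Matrix.mulVec_zero] at this
    exact this.symm
  have hXmat : (X : MatR 3) = 0 := by
    refine key _ X.2.1 X.2.2 ?_ ?_
    · exact commute_of_fixed RzSO _ (congrArg Subtype.val (hfix RzSO))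
    · exact commute_of_fixed RxSO _ (congrArg Subtype.val (hfix RxSO))
  have hX0 : X = 0 := Subtype.ext hXmat
  have : ((0 : Fin 3 → ℝ), w0) = (0 : (Fin 3 → ℝ) × (Fin 2 → ℝ)) := by
    apply T.injective
    rw [← hX, hX0, map_zero]
  have hw : w0 = 0 := congrArg Prod.snd this
  have : (1 : ℝ) = 0 := by
    have := congrFun hw 0
    simpa [hw0] using this
  norm_num at this
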